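/- arXiv:0710.3001 — 2 statements merged into one kernel-verified Lean document; each statement's English description precedes it below -/
import Mathlib

section
/- Let M be a positive integer, 1 < q ≤ M+1, and 0 < x ≤ M/(q−1). Denote by (a_i) and (b_i) the quasi-greedy and greedy expansions of x in base q, and by (α_i) the quasi-greedy expansion of 1. If (b_i) has a last nonzero element b_m (i.e., b_m ≥ 1 and b_i = 0 for all i > m), then (a_i) = b_1 ... b_{m−1} (b_m − 1) α_1 α_2 ..., i.e., a_i = b_i for i < m, a_m = b_m − 1, and a_{m+i} = α_i for all i ≥ 1. Otherwise (if (b_i) has infinitely many nonzero terms) we have (a_i) = (b_i). -/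
open Classical in
/-- The next quasi-greedy digit: the largest integer `m ≤ M` with `s + m / q ^ (n+1) < x`,
where `s` is the value of the previously chosen digits. -/
noncomputable def qgDigit (M : ℕ) (q x s : ℝ) (n : ℕ) : ℕ :=
  Nat.findGreatest (fun m => s + (m : ℝ) / q ^ (n + 1) < x) M

/-- Partial sums of the quasi-greedy expansion of `x` in base `q` with digits `≤ M`. -/
noncomputable def qgSum (M : ℕ) (q x : ℝ) : ℕ → ℝ
  | 0 => 0
  | n + 1 => qgSum M q x n + (qgDigit M q x (qgSum M q x n) n : ℝ) / q ^ (n + 1)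

/-- `quasiGreedy M q x n` is the `(n+1)`-st digit (so indexing starts at 0) of the
quasi-greedy expansion of `x` in base `q` with digits in `{0, ..., M}`:
recursively, it is the largest integer `a_n ≤ M` with `a_1/q + ⋯ + a_n/q^n < x`. -/
noncomputable def quasiGreedy (M : ℕ) (q x : ℝ) (n : ℕ) : ℕ :=
  qgDigit M q x (qgSum M q x n) n

open Classical in
/-- The next greedy digit: the largest integer `m ≤ M` with `s + m / q ^ (n+1) ≤ x`,
where `s` is the value of the previously chosen digits. -/
noncomputable def gDigit (M : ℕ) (q x s : ℝ) (n : ℕ) : ℕ :=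
  Nat.findGreatest (fun m => s + (m : ℝ) / q ^ (n + 1) ≤ x) M

/-- Partial sums of the greedy expansion of `x` in base `q` with digits `≤ M`. -/
noncomputable def gSum (M : ℕ) (q x : ℝ) : ℕ → ℝ
  | 0 => 0
  | n + 1 => gSum M q x n + (gDigit M q x (gSum M q x n) n : ℝ) / q ^ (n + 1)

/-- `greedy M q x n` is the `(n+1)`-st digit (indexing from 0) of the greedy expansion
of `x` in base `q` with digits in `{0, ..., M}`: recursively, it is the largest
integer `b_n ≤ M` with `b_1/q + ⋯ + b_n/q^n ≤ x`. -/
noncomputable def greedy (M : ℕ) (q x : ℝ) (n : ℕ) : ℕ :=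
  gDigit M q x (gSum M q x n) n

/- ## Auxiliary lemmas -/

lemma fg_congr {P Q : ℕ → Prop} [DecidablePred P] [DecidablePred Q]
    (h : ∀ n, P n ↔ Q n) : ∀ n, Nat.findGreatest P n = Nat.findGreatest Q n := by
  intro n
  induction n with
  | zero => rfl
  | succ n ih =>
    rw [Nat.findGreatest_succ, Nat.findGreatest_succ, ih]
    by_cases hp : P (n + 1)
    · rw [if_pos hp, if_pos ((h _).1 hp)]
    · rw [if_neg hp, if_neg (fun hq => hp ((h _).2 hq))]

lemma fg_spec_pos {P : ℕ → Prop} [DecidablePred P] {n : ℕ}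
    (h : Nat.findGreatest P n ≠ 0) : P (Nat.findGreatest P n) :=
  (Nat.findGreatest_eq_iff.1 rfl).2.1 h

lemma qgSum_succ (M : ℕ) (q x : ℝ) (n : ℕ) :
    qgSum M q x (n + 1) = qgSum M q x n + (quasiGreedy M q x n : ℝ) / q ^ (n + 1) := rfl

lemma gSum_succ (M : ℕ) (q x : ℝ) (n : ℕ) :
    gSum M q x (n + 1) = gSum M q x n + (greedy M q x n : ℝ) / q ^ (n + 1) := rfl

lemma qgSum_lt (M : ℕ) (q x : ℝ) (hx0 : 0 < x) : ∀ n, qgSum M q x n < x := by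
  intro n
  induction n with
  | zero => simpa [qgSum] using hx0
  | succ n ih =>
    have h0 : qgSum M q x n + ((0 : ℕ) : ℝ) / q ^ (n + 1) < x := by simpa using ih
    exact Nat.findGreatest_spec (P := fun m => qgSum M q x n + (m : ℝ) / q ^ (n + 1) < x)
      (Nat.zero_le M) h0

lemma gSum_le (M : ℕ) (q x : ℝ) (hx0 : 0 ≤ x) : ∀ n, gSum M q x n ≤ x := by
  intro n
  induction n with
  | zero => simpa [gSum] using hx0
  | succ n ih =>
    have h0 : gSum M q x n + ((0 : ℕ) : ℝ) / q ^ (n + 1) ≤ x := by simpa using ih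
    exact Nat.findGreatest_spec (P := fun m => gSum M q x n + (m : ℝ) / q ^ (n + 1) ≤ x)
      (Nat.zero_le M) h0

/-- If all greedy partial sums up to `n` are `< x` then the two expansions agree up to `n`. -/
lemma agree (M : ℕ) (q x : ℝ) :
    ∀ n, (∀ k, k < n → gSum M q x (k + 1) < x) →
      qgSum M q x n = gSum M q x n ∧ ∀ k, k < n → quasiGreedy M q x k = greedy M q x k := by
  intro n
  induction n with
  | zero => exact fun _ => ⟨rfl, fun k hk => absurd hk (Nat.not_lt_zero k)⟩
  | succ n ih =>
    intro h
    obtain ⟨hs, hd⟩ := ih (fun k hk => h k (Nat.lt_succ_of_lt hk))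
    have hb : gSum M q x n + ((greedy M q x n : ℕ) : ℝ) / q ^ (n + 1) < x := by
      have := h n (Nat.lt_succ_self n)
      rwa [gSum_succ] at this
    have hab : quasiGreedy M q x n = greedy M q x n := by
      apply le_antisymm
      · rcases Nat.eq_zero_or_pos (quasiGreedy M q x n) with h0 | h0
        · simp [h0]
        · have hPa : qgSum M q x n + ((quasiGreedy M q x n : ℕ) : ℝ) / q ^ (n + 1) < x :=
            fg_spec_pos (Nat.pos_iff_ne_zero.1 h0)
          exact Nat.le_findGreatest (Nat.findGreatest_le M) (by rw [← hs]; exact le_of_lt hPa)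
      · exact Nat.le_findGreatest (Nat.findGreatest_le M) (by rw [hs]; exact hb)
    refine ⟨?_, fun k hk => ?_⟩
    · rw [qgSum_succ, gSum_succ, hs, hab]
    · rcases Nat.lt_succ_iff_lt_or_eq.1 hk with h' | h'
      · exact hd k h'
      · subst h'; exact hab

/-- `gSum` is monotone. -/
lemma gSum_mono (M : ℕ) (q x : ℝ) (hq : 0 < q) : Monotone (gSum M q x) := by
  refine monotone_nat_of_le_succ fun n => ?_
  rw [gSum_succ]
  have : (0 : ℝ) ≤ (greedy M q x n : ℝ) / q ^ (n + 1) :=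
    div_nonneg (Nat.cast_nonneg _) (le_of_lt (pow_pos hq _))
  linarith

/-- Key arithmetic equivalence for the tail computation. -/
lemma tail_iff (P Q : ℝ) (hP : 0 < P) (x t a : ℝ) :
    x - 1 / P + t / P + a / (P * Q) < x ↔ t + a / Q < 1 := by
  rw [mul_comm, ← div_div]
  have e : x - 1 / P + t / P + a / Q / P = x - 1 / P + (t + a / Q) / P := by
    rw [add_div]; ring
  rw [e]
  constructor
  · intro h
    have h2 : (t + a / Q) / P < 1 / P := by linarith
    exact (div_lt_div_iff_of_pos_right hP).1 h2
  · intro h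
    have h2 : (t + a / Q) / P < 1 / P := (div_lt_div_iff_of_pos_right hP).2 h
    linarith

/-- Proposition 3.4 (a): if the greedy expansion `(b_i)` of `x` has a last nonzero element
`b_m`, then the quasi-greedy expansion of `x` is `b_1 … b_{m-1} (b_m - 1) α_1 α_2 …`,
where `(α_i)` is the quasi-greedy expansion of `1`; otherwise the two expansions coincide. -/
theorem quasiGreedy_eq_of_greedy (M : ℕ) (hM : 0 < M) (q x : ℝ) (hq1 : 1 < q)
    (hq2 : q ≤ (M : ℝ) + 1) (hx0 : 0 < x) (hx1 : x ≤ (M : ℝ) / (q - 1)) :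
    (∀ m : ℕ, 1 ≤ greedy M q x m → (∀ i, m < i → greedy M q x i = 0) →
      ((∀ i, i < m → quasiGreedy M q x i = greedy M q x i) ∧
        quasiGreedy M q x m = greedy M q x m - 1 ∧
        ∀ i, quasiGreedy M q x (m + 1 + i) = quasiGreedy M q 1 i)) ∧
    ({n | greedy M q x n ≠ 0}.Infinite → quasiGreedy M q x = greedy M q x) := by
  have hq0 : (0 : ℝ) < q := lt_trans zero_lt_one hq1
  constructor
  · intro m hbm hzero
    -- greedy sums are constant after m+1
    have hconst : ∀ i, gSum M q x (m + 1 + i) = gSum M q x (m + 1) := by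
      intro i
      induction i with
      | zero => rfl
      | succ i ih =>
        have : gSum M q x (m + 1 + i + 1) = gSum M q x (m + 1 + i) +
            (greedy M q x (m + 1 + i) : ℝ) / q ^ (m + 1 + i + 1) := gSum_succ ..
        rw [show m + 1 + (i + 1) = m + 1 + i + 1 by ring, this,
          hzero (m + 1 + i) (by omega), ih]
        simp
    -- gSum (m+1) = x
    have hgx : gSum M q x (m + 1) = x := by
      have hle : gSum M q x (m + 1) ≤ x := gSum_le M q x (le_of_lt hx0) _
      by_contra hne
      have hlt : gSum M q x (m + 1) < x := lt_of_le_of_ne hle hne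
      -- pick n with (1/q)^(n+1) < x - gSum (m+1)
      obtain ⟨n, hn⟩ := exists_pow_lt_of_lt_one (sub_pos.2 hlt)
        (by rw [div_lt_one hq0]; exact hq1 : 1 / q < 1)
      -- greedy digit at position m+1+n is zero
      have h0 : greedy M q x (m + 1 + n) = 0 := hzero _ (by omega)
      have hnP : ¬ (gSum M q x (m + 1 + n) + ((1 : ℕ) : ℝ) / q ^ (m + 1 + n + 1) ≤ x) :=
        Nat.findGreatest_eq_zero_iff.1 h0 one_pos hM
      push_neg at hnP
      rw [hconst n] at hnP
      have hpow : ((1 : ℕ) : ℝ) / q ^ (m + 1 + n + 1) ≤ (1 / q) ^ n := by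
        rw [Nat.cast_one, div_pow, one_pow]
        exact one_div_le_one_div_of_le (pow_pos hq0 n)
          (pow_le_pow_right₀ (le_of_lt hq1) (by omega))
      linarith
    -- greedy partial sums before m are < x
    have hlt : ∀ k, k < m → gSum M q x (k + 1) < x := by
      intro k hk
      have h1 : gSum M q x (k + 1) ≤ gSum M q x m := gSum_mono M q x hq0 (by omega)
      have h2 : gSum M q x m < x := by
        have := gSum_succ M q x m
        rw [hgx] at this
        have hpos : (0 : ℝ) < (greedy M q x m : ℝ) / q ^ (m + 1) := by
          apply div_pos _ (pow_pos hq0 _)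
          exact_mod_cast Nat.lt_of_lt_of_le Nat.zero_lt_one hbm
        linarith
      linarith
    obtain ⟨hs, hd⟩ := agree M q x m hlt
    -- the digit at m
    have hgsum_eq : gSum M q x m + (greedy M q x m : ℝ) / q ^ (m + 1) = x := by
      rw [← gSum_succ, hgx]
    have hdm : quasiGreedy M q x m = greedy M q x m - 1 := by
      apply le_antisymm
      · by_contra hcon
        push_neg at hcon
        have hge : greedy M q x m ≤ quasiGreedy M q x m := by omega
        have h0 : quasiGreedy M q x m ≠ 0 := by omega
        have hPa : qgSum M q x m + ((quasiGreedy M q x m : ℕ) : ℝ) / q ^ (m + 1) < x :=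
          fg_spec_pos h0
        rw [hs] at hPa
        have hmono : (greedy M q x m : ℝ) / q ^ (m + 1) ≤
            (quasiGreedy M q x m : ℝ) / q ^ (m + 1) := by
          gcongr
          all_goals exact_mod_cast hge
        linarith
      · have hbM : greedy M q x m ≤ M := Nat.findGreatest_le M
        apply Nat.le_findGreatest (by omega)
        rw [hs]
        have hcast : ((greedy M q x m - 1 : ℕ) : ℝ) = (greedy M q x m : ℝ) - 1 := by
          rw [Nat.cast_sub hbm, Nat.cast_one]
        rw [hcast, sub_div]
        have : (0 : ℝ) < 1 / q ^ (m + 1) := div_pos one_pos (pow_pos hq0 _)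
        linarith
    -- the tail
    have hbase : qgSum M q x (m + 1) = x - 1 / q ^ (m + 1) := by
      have hcast : ((greedy M q x m - 1 : ℕ) : ℝ) = (greedy M q x m : ℝ) - 1 := by
        rw [Nat.cast_sub hbm, Nat.cast_one]
      rw [qgSum_succ, hdm, hcast, hs, sub_div]
      linarith
    have htail : ∀ i, qgSum M q x (m + 1 + i) =
        x - 1 / q ^ (m + 1) + qgSum M q 1 i / q ^ (m + 1) ∧
        quasiGreedy M q x (m + 1 + i) = quasiGreedy M q 1 i := by
      intro i
      induction i with
      | zero =>
        have hsum0 : qgSum M q x (m + 1 + 0) = x - 1 / q ^ (m + 1) +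
            qgSum M q 1 0 / q ^ (m + 1) := by
          show qgSum M q x (m + 1) = x - 1 / q ^ (m + 1) + qgSum M q 1 0 / q ^ (m + 1)
          rw [hbase]
          simp [qgSum]
        refine ⟨hsum0, ?_⟩
        show qgDigit M q x (qgSum M q x (m + 1 + 0)) (m + 1 + 0) =
          qgDigit M q 1 (qgSum M q 1 0) 0
        unfold qgDigit
        apply fg_congr
        intro a
        rw [hsum0]
        have := tail_iff (q ^ (m + 1)) (q ^ (0 + 1)) (pow_pos hq0 _) x (qgSum M q 1 0) a
        rw [show q ^ (m + 1 + 0 + 1) = q ^ (m + 1) * q ^ (0 + 1) from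
          pow_add q (m + 1) (0 + 1)]
        exact this
      | succ i ih =>
        obtain ⟨ihs, ihd⟩ := ih
        have hsum : qgSum M q x (m + 1 + (i + 1)) = x - 1 / q ^ (m + 1) +
            qgSum M q 1 (i + 1) / q ^ (m + 1) := by
          rw [show m + 1 + (i + 1) = (m + 1 + i) + 1 by ring, qgSum_succ, ihs, ihd,
            qgSum_succ, show (m + 1 + i + 1) = (m + 1) + (i + 1) by ring, pow_add,
            add_div]
          rw [mul_comm, ← div_div]
          ring
        refine ⟨hsum, ?_⟩
        show qgDigit M q x (qgSum M q x (m + 1 + (i + 1))) (m + 1 + (i + 1)) =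
          qgDigit M q 1 (qgSum M q 1 (i + 1)) (i + 1)
        unfold qgDigit
        apply fg_congr
        intro a
        rw [hsum]
        have := tail_iff (q ^ (m + 1)) (q ^ (i + 1 + 1)) (pow_pos hq0 _) x
          (qgSum M q 1 (i + 1)) a
        rw [show q ^ (m + 1 + (i + 1) + 1) = q ^ (m + 1) * q ^ (i + 1 + 1) from
          pow_add q (m + 1) (i + 1 + 1)]
        exact this
    exact ⟨hd, hdm, fun i => (htail i).2⟩
  · -- infinite case
    intro hinf
    have hlt : ∀ n, gSum M q x (n + 1) < x := by
      intro n
      obtain ⟨i, hi_mem, hi⟩ := hinf.exists_gt n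
      have h1 : gSum M q x (n + 1) ≤ gSum M q x i := gSum_mono M q x hq0 (by omega)
      have h2 : gSum M q x i < gSum M q x (i + 1) := by
        rw [gSum_succ]
        have hpos : (0 : ℝ) < (greedy M q x i : ℝ) / q ^ (i + 1) := by
          apply div_pos _ (pow_pos hq0 _)
          exact_mod_cast Nat.pos_of_ne_zero hi_mem
        linarith
      have h3 : gSum M q x (i + 1) ≤ x := gSum_le M q x (le_of_lt hx0) _
      linarith
    funext n
    exact (agree M q x (n + 1) (fun k hk => hlt k)).2 n (Nat.lt_succ_self n)
end

section
/- Let M be a positive integer and 1 < q ≤ M+1. Denote by (α_i) and (β_i) the quasi-greedy and greedy expansions of 1 in base q. If (β_i) has a last nonzero element β_m, then (α_i) is periodic with smallest period β_1 ... β_{m−1} (β_m − 1), i.e., (α_i) = (β_1 ... β_{m−1} (β_m − 1))^∞ and no proper divisor of m is a period. Otherwise (β_i) = (α_i), and in this case the sequence (α_i) is periodic only in the extreme case q = M+1, when (β_i) = (α_i) = M^∞ (all digits equal to M). -/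
namespace QGAux

variable {M : ℕ} {q : ℝ}

lemma gSum_succ (M : ℕ) (q : ℝ) (n : ℕ) :
    gSum M q 1 (n+1) = gSum M q 1 n + (greedy M q 1 n : ℝ)/q^(n+1) := rfl

lemma qgSum_succ (M : ℕ) (q : ℝ) (n : ℕ) :
    qgSum M q 1 (n+1) = qgSum M q 1 n + (quasiGreedy M q 1 n : ℝ)/q^(n+1) := rfl

lemma greedy_le (M : ℕ) (q : ℝ) (n : ℕ) : greedy M q 1 n ≤ M := Nat.findGreatest_le M

lemma quasiGreedy_le (M : ℕ) (q : ℝ) (n : ℕ) : quasiGreedy M q 1 n ≤ M := Nat.findGreatest_le M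

lemma greedy_spec {n : ℕ} (h : greedy M q 1 n ≠ 0) :
    gSum M q 1 n + (greedy M q 1 n : ℝ)/q^(n+1) ≤ 1 :=
  (Nat.findGreatest_eq_iff.mp (rfl : greedy M q 1 n = greedy M q 1 n)).2.1 h

lemma greedy_greatest {n k : ℕ} (h1 : greedy M q 1 n < k) (h2 : k ≤ M) :
    ¬ (gSum M q 1 n + (k : ℝ)/q^(n+1) ≤ 1) :=
  (Nat.findGreatest_eq_iff.mp (rfl : greedy M q 1 n = greedy M q 1 n)).2.2 h1 h2

lemma quasiGreedy_spec {n : ℕ} (h : quasiGreedy M q 1 n ≠ 0) :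
    qgSum M q 1 n + (quasiGreedy M q 1 n : ℝ)/q^(n+1) < 1 :=
  (Nat.findGreatest_eq_iff.mp (rfl : quasiGreedy M q 1 n = quasiGreedy M q 1 n)).2.1 h

lemma quasiGreedy_greatest {n k : ℕ} (h1 : quasiGreedy M q 1 n < k) (h2 : k ≤ M) :
    ¬ (qgSum M q 1 n + (k : ℝ)/q^(n+1) < 1) :=
  (Nat.findGreatest_eq_iff.mp (rfl : quasiGreedy M q 1 n = quasiGreedy M q 1 n)).2.2 h1 h2

end QGAux
namespace QGAux
variable {M : ℕ} {q : ℝ}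

lemma shift_le {c w : ℝ} (hc : 0 < c) (g t : ℝ) :
    1 - 1/c + g/c + t/(c*w) ≤ 1 ↔ g + t/w ≤ 1 := by
  rw [div_mul_eq_div_div_swap]
  rw [show (1:ℝ) - 1/c + g/c + t/w/c = 1 + (g + t/w)/c - 1/c by rw [add_div]; ring]
  rw [show (1:ℝ) + (g + t/w)/c - 1/c ≤ 1 ↔ (g + t/w)/c ≤ 1/c by constructor <;> intro <;> linarith]
  exact div_le_div_iff_of_pos_right hc

lemma shift_lt {c w : ℝ} (hc : 0 < c) (g t : ℝ) :
    1 - 1/c + g/c + t/(c*w) < 1 ↔ g + t/w < 1 := by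
  rw [div_mul_eq_div_div_swap]
  rw [show (1:ℝ) - 1/c + g/c + t/w/c = 1 + (g + t/w)/c - 1/c by rw [add_div]; ring]
  rw [show (1:ℝ) + (g + t/w)/c - 1/c < 1 ↔ (g + t/w)/c < 1/c by constructor <;> intro <;> linarith]
  exact div_lt_div_iff_of_pos_right hc

lemma gSum_invariant (hq1 : 1 < q) (hq2 : q ≤ (M : ℝ) + 1) :
    ∀ n, gSum M q 1 n ≤ 1 ∧ 1 - gSum M q 1 n ≤ (1/q)^n := by
  have hq0 : (0:ℝ) < q := lt_trans one_pos hq1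
  intro n
  induction n with
  | zero => simp [gSum]
  | succ n ih =>
    have hqn : (0:ℝ) < q^(n+1) := by positivity
    have hdle := greedy_le M q n
    rw [gSum_succ]
    constructor
    · rcases Nat.eq_zero_or_pos (greedy M q 1 n) with h0 | h0
      · rw [h0]; simpa using ih.1
      · exact greedy_spec (by omega)
    · rcases lt_or_eq_of_le hdle with hlt | heq
      · have hng := greedy_greatest (k := greedy M q 1 n + 1) (Nat.lt_succ_self _) hlt
        push_neg at hng
        push_cast at hng
        rw [one_div_pow]
        have : ((greedy M q 1 n : ℝ) + 1)/q^(n+1)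
            = (greedy M q 1 n : ℝ)/q^(n+1) + 1/q^(n+1) := by ring
        rw [this] at hng
        linarith
      · have hsplit : (1/q)^n = (q-1)/q^(n+1) + (1/q)^(n+1) := by
          rw [one_div_pow, one_div_pow, pow_succ, ← add_div, sub_add_cancel, mul_comm,
            ← div_div, div_self (ne_of_gt hq0)]
        have hM' : (q-1)/q^(n+1) ≤ (M:ℝ)/q^(n+1) := by gcongr; linarith
        rw [heq]
        have := ih.2
        rw [hsplit] at this
        push_cast
        linarith

lemma qgSum_invariant (hq1 : 1 < q) (hq2 : q ≤ (M : ℝ) + 1) :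
    ∀ n, qgSum M q 1 n < 1 ∧ 1 - qgSum M q 1 n ≤ (1/q)^n := by
  have hq0 : (0:ℝ) < q := lt_trans one_pos hq1
  intro n
  induction n with
  | zero => simp [qgSum]
  | succ n ih =>
    have hqn : (0:ℝ) < q^(n+1) := by positivity
    have hdle := quasiGreedy_le M q n
    rw [qgSum_succ]
    constructor
    · rcases Nat.eq_zero_or_pos (quasiGreedy M q 1 n) with h0 | h0
      · rw [h0]; simpa using ih.1
      · exact quasiGreedy_spec (by omega)
    · rcases lt_or_eq_of_le hdle with hlt | heq
      · have hng := quasiGreedy_greatest (k := quasiGreedy M q 1 n + 1) (Nat.lt_succ_self _) hlt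
        push_neg at hng
        push_cast at hng
        rw [one_div_pow]
        have : ((quasiGreedy M q 1 n : ℝ) + 1)/q^(n+1)
            = (quasiGreedy M q 1 n : ℝ)/q^(n+1) + 1/q^(n+1) := by ring
        rw [this] at hng
        linarith
      · have hsplit : (1/q)^n = (q-1)/q^(n+1) + (1/q)^(n+1) := by
          rw [one_div_pow, one_div_pow, pow_succ, ← add_div, sub_add_cancel, mul_comm,
            ← div_div, div_self (ne_of_gt hq0)]
        have hM' : (q-1)/q^(n+1) ≤ (M:ℝ)/q^(n+1) := by gcongr; linarith
        rw [heq]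
        have := ih.2
        rw [hsplit] at this
        push_cast
        linarith

lemma gSum_mono (hq1 : 1 < q) : Monotone (gSum M q 1) := by
  have hq0 : (0:ℝ) < q := lt_trans one_pos hq1
  apply monotone_nat_of_le_succ
  intro n
  rw [gSum_succ]
  have : (0:ℝ) ≤ (greedy M q 1 n : ℝ)/q^(n+1) := by positivity
  linarith


open Filter Topology in
lemma qgSum_tendsto (hq1 : 1 < q) (hq2 : q ≤ (M : ℝ) + 1) :
    Tendsto (qgSum M q 1) atTop (𝓝 1) := by
  have hq0 : (0:ℝ) < q := lt_trans one_pos hq1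
  have h0 : (0:ℝ) ≤ 1/q := by positivity
  have h1 : 1/q < 1 := by rw [div_lt_one hq0]; exact hq1
  have hlow : Tendsto (fun n : ℕ => 1 - (1/q)^n) atTop (𝓝 1) := by
    have := (tendsto_pow_atTop_nhds_zero_of_lt_one h0 h1).const_sub 1
    simpa using this
  refine tendsto_of_tendsto_of_tendsto_of_le_of_le hlow tendsto_const_nhds ?_ ?_
  · intro n; have := (qgSum_invariant hq1 hq2 n).2; simp only; linarith
  · intro n; exact le_of_lt (qgSum_invariant hq1 hq2 n).1

lemma periodic_qgSum {p : ℕ} (hq1 : 1 < q)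
    (hper : ∀ i, quasiGreedy M q 1 (i + p) = quasiGreedy M q 1 i) :
    ∀ n, qgSum M q 1 (n + p) = qgSum M q 1 p + (1/q)^p * qgSum M q 1 n := by
  have hq0 : (0:ℝ) < q := lt_trans one_pos hq1
  have hqne : q ≠ 0 := ne_of_gt hq0
  intro n
  induction n with
  | zero => simp [qgSum]
  | succ n ih =>
    have e : n + 1 + p = (n + p) + 1 := by omega
    rw [e, qgSum_succ, ih, hper n, qgSum_succ]
    have hpow : q^(n + p + 1) = q^p * q^(n+1) := by rw [← pow_add]; congr 1; omega
    rw [hpow, one_div_pow]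
    field_simp
    ring

open Filter Topology in
lemma periodic_qgSum_eq {p : ℕ} (hq1 : 1 < q) (hq2 : q ≤ (M : ℝ) + 1)
    (hper : ∀ i, quasiGreedy M q 1 (i + p) = quasiGreedy M q 1 i) :
    qgSum M q 1 p = 1 - (1/q)^p := by
  have t1 : Tendsto (fun n : ℕ => qgSum M q 1 (n + p)) atTop (𝓝 1) :=
    (Filter.tendsto_add_atTop_iff_nat p).mpr (qgSum_tendsto hq1 hq2)
  have t2 : Tendsto (fun n : ℕ => qgSum M q 1 p + (1/q)^p * qgSum M q 1 n) atTop
      (𝓝 (qgSum M q 1 p + (1/q)^p * 1)) :=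
    (tendsto_const_nhds.add ((qgSum_tendsto hq1 hq2).const_mul _))
  have t3 : Tendsto (fun n : ℕ => qgSum M q 1 (n + p)) atTop
      (𝓝 (qgSum M q 1 p + (1/q)^p * 1)) := by
    have := periodic_qgSum hq1 hper
    simpa [funext this] using t2
  have := tendsto_nhds_unique t1 t3
  linarith [this]


lemma mod_succ_eq_zero {n m : ℕ} (h : n % (m+1) = m) : (n+1) % (m+1) = 0 := by
  have h1 := Nat.div_add_mod n (m+1)
  have e : n + 1 = (m+1) * (n/(m+1)) + (m+1) := by omega
  rw [e, Nat.mul_add_mod, Nat.mod_self]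

lemma mod_succ_eq_succ {n m : ℕ} (h : n % (m+1) ≠ m) : (n+1) % (m+1) = n % (m+1) + 1 := by
  have h1 := Nat.div_add_mod n (m+1)
  have h2 : n % (m+1) < m + 1 := Nat.mod_lt _ (Nat.succ_pos m)
  have e : n + 1 = (n % (m+1) + 1) + (m+1) * (n/(m+1)) := by omega
  rw [e, Nat.add_mul_mod_self_left, Nat.mod_eq_of_lt (by omega)]

/-- If the greedy partial sum ever equals `1 - q⁻ᵖ`, the greedy digits repeat with period p. -/
lemma greedy_shift_sum {p : ℕ} (hq1 : 1 < q)
    (hsp : gSum M q 1 p = 1 - (1/q)^p) :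
    ∀ i, gSum M q 1 (p + i) = 1 - (1/q)^p + (1/q)^p * gSum M q 1 i ∧
      greedy M q 1 (p + i) = greedy M q 1 i := by
  have hq0 : (0:ℝ) < q := lt_trans one_pos hq1
  have hqp : (0:ℝ) < q^p := by positivity
  have key : ∀ i, gSum M q 1 (p + i) = 1 - (1/q)^p + (1/q)^p * gSum M q 1 i →
      greedy M q 1 (p + i) = greedy M q 1 i := by
    intro i hs
    have hpow : q^(p + i + 1) = q^p * q^(i+1) := by rw [← pow_add]; congr 1
    have hiff : ∀ a : ℕ, (gSum M q 1 (p+i) + (a:ℝ)/q^(p+i+1) ≤ 1)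
        ↔ (gSum M q 1 i + (a:ℝ)/q^(i+1) ≤ 1) := by
      intro a
      rw [hs, hpow, one_div_pow]
      have e : (1:ℝ) - 1/q^p + (1/q^p) * gSum M q 1 i + (a:ℝ)/(q^p * q^(i+1))
          = 1 - 1/q^p + (gSum M q 1 i)/q^p + (a:ℝ)/(q^p * q^(i+1)) := by ring
      constructor
      · intro h
        have h' : 1 - 1/q^p + (gSum M q 1 i)/q^p + (a:ℝ)/(q^p * q^(i+1)) ≤ 1 := by
          rw [← e]; exact h
        exact (shift_le hqp _ _).mp h'
      · intro h
        have h' := (shift_le hqp (gSum M q 1 i) (a:ℝ) (w := q^(i+1))).mpr h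
        rw [← e] at h'; exact h'
    show gDigit M q 1 (gSum M q 1 (p+i)) (p+i) = greedy M q 1 i
    apply Nat.findGreatest_eq_iff.mpr
    refine ⟨greedy_le M q i, fun hne => ?_, fun a ha haM => ?_⟩
    · exact (hiff _).mpr (greedy_spec hne)
    · intro hcon
      exact greedy_greatest ha haM ((hiff _).mp hcon)
  intro i
  induction i with
  | zero =>
    refine ⟨by simpa [gSum] using hsp, key 0 (by simpa [gSum] using hsp)⟩
  | succ i ih =>
    have hd := key i ih.1
    have e : p + (i + 1) = (p + i) + 1 := by omega
    constructor
    · rw [e, gSum_succ, ih.1, hd, gSum_succ]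
      have hpow : q^(p + i + 1) = q^p * q^(i+1) := by rw [← pow_add]; congr 1
      rw [hpow, one_div_pow]
      field_simp
      ring
    · apply key
      rw [e, gSum_succ, ih.1, hd, gSum_succ]
      have hpow : q^(p + i + 1) = q^p * q^(i+1) := by rw [← pow_add]; congr 1
      rw [hpow, one_div_pow]
      field_simp
      ring

/-- equality in the greedy invariant at a positive index forces q = M+1 -/
lemma top_of_gSum_eq (hq1 : 1 < q) (hq2 : q ≤ (M : ℝ) + 1) {n : ℕ}
    (h : 1 - gSum M q 1 (n+1) = (1/q)^(n+1)) : q = (M : ℝ) + 1 := by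
  have hq0 : (0:ℝ) < q := lt_trans one_pos hq1
  have hqn : (0:ℝ) < q^(n+1) := by positivity
  have hdle := greedy_le M q n
  have hdM : greedy M q 1 n = M := by
    by_contra hne
    have hlt : greedy M q 1 n < M := lt_of_le_of_ne hdle hne
    have hng := greedy_greatest (k := greedy M q 1 n + 1) (Nat.lt_succ_self _) hlt
    push_neg at hng
    rw [gSum_succ, one_div_pow] at h
    push_cast at hng
    have : ((greedy M q 1 n : ℝ) + 1)/q^(n+1)
        = (greedy M q 1 n : ℝ)/q^(n+1) + 1/q^(n+1) := by ring
    rw [this] at hng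
    linarith
  have hinv := (gSum_invariant hq1 hq2 n).2
  rw [gSum_succ, hdM, one_div_pow] at h
  rw [one_div_pow] at hinv
  -- 1 - gSum n = (M+1)/q^(n+1) ≤ 1/q^n = q/q^(n+1)
  have hsplit : (1:ℝ)/q^n = q/q^(n+1) := by
    rw [pow_succ]
    field_simp
  rw [hsplit] at hinv
  have hdiv : ((M:ℝ)+1)/q^(n+1) = (M:ℝ)/q^(n+1) + 1/q^(n+1) := by ring
  have h' : 1 - gSum M q 1 n = ((M:ℝ)+1)/q^(n+1) := by
    rw [hdiv]
    linarith
  rw [h'] at hinv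
  have : (M:ℝ) + 1 ≤ q := (div_le_div_iff_of_pos_right hqn).mp hinv
  linarith

/-- if q = M+1 then greedy digits are all M and gSum n = 1 - q⁻ⁿ -/
lemma greedy_of_top (hq1 : 1 < q) (hqM : q = (M : ℝ) + 1) :
    ∀ n, gSum M q 1 n = 1 - (1/q)^n ∧ greedy M q 1 n = M := by
  have hq0 : (0:ℝ) < q := lt_trans one_pos hq1
  have key : ∀ n, gSum M q 1 n = 1 - (1/q)^n → greedy M q 1 n = M := by
    intro n hs
    have hqn : (0:ℝ) < q^(n+1) := by positivity
    apply Nat.findGreatest_eq_iff.mpr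
    refine ⟨le_refl M, fun _ => ?_, fun a ha ha' => absurd (lt_of_lt_of_le ha ha') (lt_irrefl M)⟩
    show gSum M q 1 n + (M:ℝ)/q^(n+1) ≤ 1
    rw [hs, one_div_pow]
    have hsplit : (1:ℝ)/q^n = q/q^(n+1) := by rw [pow_succ]; field_simp
    rw [hsplit]
    have : (M:ℝ)/q^(n+1) ≤ q/q^(n+1) := by gcongr; linarith
    linarith
  intro n
  induction n with
  | zero => exact ⟨by simp [gSum], key 0 (by simp [gSum])⟩
  | succ n ih =>
    have hd := key n ih.1
    have hs : gSum M q 1 (n+1) = 1 - (1/q)^(n+1) := by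
      rw [gSum_succ, ih.1, hd, one_div_pow, one_div_pow, pow_succ]
      have : (M:ℝ) = q - 1 := by rw [hqM]; ring
      rw [this]
      field_simp
      ring
    exact ⟨hs, key (n+1) hs⟩


lemma greedy_zero_of_gSum_one (hq1 : 1 < q) {n : ℕ} (h : gSum M q 1 n = 1) :
    ∀ k, gSum M q 1 (n + k) = 1 ∧ greedy M q 1 (n + k) = 0 := by
  have hq0 : (0:ℝ) < q := lt_trans one_pos hq1
  have key : ∀ j, gSum M q 1 j = 1 → greedy M q 1 j = 0 := by
    intro j hj
    apply Nat.findGreatest_eq_iff.mpr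
    refine ⟨Nat.zero_le _, fun hne => absurd rfl hne, fun a ha haM => ?_⟩
    intro hcon
    have hqj : (0:ℝ) < q^(j+1) := by positivity
    have : (0:ℝ) < (a:ℝ)/q^(j+1) := by
      apply div_pos _ hqj
      exact_mod_cast ha
    rw [hj] at hcon
    linarith
  intro k
  induction k with
  | zero => exact ⟨h, key n h⟩
  | succ k ih =>
    have e : n + (k+1) = (n + k) + 1 := by omega
    have hs : gSum M q 1 (n + (k+1)) = 1 := by
      rw [e, gSum_succ, ih.1, ih.2]
      simp
    exact ⟨hs, key _ hs⟩

lemma gSum_lt_one_of_inf (hq1 : 1 < q) (hq2 : q ≤ (M : ℝ) + 1)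
    (hinf : {n | greedy M q 1 n ≠ 0}.Infinite) : ∀ n, gSum M q 1 n < 1 := by
  intro n
  rcases lt_or_eq_of_le (gSum_invariant hq1 hq2 n).1 with h | h
  · exact h
  · exfalso
    have hz := greedy_zero_of_gSum_one hq1 h
    have hsub : {i | greedy M q 1 i ≠ 0} ⊆ Set.Iio n := by
      intro i hi
      by_contra hge
      simp only [Set.mem_Iio, not_lt] at hge
      exact hi (by have := (hz (i - n)).2; rwa [Nat.add_sub_cancel' hge] at this)
    exact hinf (Set.Finite.subset (Set.finite_Iio n) hsub)

lemma greedy_eq_quasi_of_lt (hq1 : 1 < q) (hlt : ∀ n, gSum M q 1 n < 1) :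
    ∀ n, gSum M q 1 n = qgSum M q 1 n ∧ greedy M q 1 n = quasiGreedy M q 1 n := by
  have hq0 : (0:ℝ) < q := lt_trans one_pos hq1
  have key : ∀ n, gSum M q 1 n = qgSum M q 1 n → greedy M q 1 n = quasiGreedy M q 1 n := by
    intro n hs
    have hs1 : gSum M q 1 (n+1) < 1 := hlt (n+1)
    rw [gSum_succ] at hs1
    symm
    show qgDigit M q 1 (qgSum M q 1 n) n = greedy M q 1 n
    apply Nat.findGreatest_eq_iff.mpr
    refine ⟨greedy_le M q n, fun _ => ?_, fun a ha haM => ?_⟩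
    · rw [← hs]; exact hs1
    · intro hcon
      rw [← hs] at hcon
      exact greedy_greatest ha haM (le_of_lt hcon)
  intro n
  induction n with
  | zero => exact ⟨rfl, key 0 rfl⟩
  | succ n ih =>
    have hs : gSum M q 1 (n+1) = qgSum M q 1 (n+1) := by
      rw [gSum_succ, qgSum_succ, ih.1, key n ih.1]
    exact ⟨hs, key _ hs⟩


lemma part1_basics (hq1 : 1 < q) (hq2 : q ≤ (M : ℝ) + 1) {m : ℕ}
    (hm1 : 1 ≤ greedy M q 1 m) (hz : ∀ i, m < i → greedy M q 1 i = 0) :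
    gSum M q 1 (m+1) = 1 ∧ ∀ r, r ≤ m → gSum M q 1 r < 1 := by
  have hq0 : (0:ℝ) < q := lt_trans one_pos hq1
  have h1q : (1:ℝ)/q < 1 := by rw [div_lt_one hq0]; exact hq1
  have hstable : ∀ k, gSum M q 1 (m+1+k) = gSum M q 1 (m+1) := by
    intro k
    induction k with
    | zero => rfl
    | succ k ih =>
      have e : m+1+(k+1) = (m+1+k)+1 := by omega
      rw [e, gSum_succ, hz _ (by omega), ih]
      simp
  have hone : gSum M q 1 (m+1) = 1 := by
    rcases lt_or_eq_of_le (gSum_invariant hq1 hq2 (m+1)).1 with h | h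
    · exfalso
      have hpos : 0 < 1 - gSum M q 1 (m+1) := by linarith
      obtain ⟨k, hk⟩ := exists_pow_lt_of_lt_one hpos h1q
      have h1 := (gSum_invariant hq1 hq2 (m+1+k)).2
      rw [hstable k] at h1
      have h2 : (1/q)^(m+1+k) ≤ (1/q)^k := by
        apply pow_le_pow_of_le_one (by positivity) (le_of_lt h1q) (by omega)
      linarith
    · exact h
  refine ⟨hone, fun r hr => ?_⟩
  have h1 : gSum M q 1 r ≤ gSum M q 1 m := gSum_mono hq1 hr
  have h2 : gSum M q 1 m + (greedy M q 1 m : ℝ)/q^(m+1) = 1 := by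
    rw [← gSum_succ]; exact hone
  have h3 : (0:ℝ) < (greedy M q 1 m : ℝ)/q^(m+1) := by
    apply div_pos _ (by positivity)
    exact_mod_cast hm1
  linarith

lemma part1_digit (hq1 : 1 < q) {m : ℕ}
    (hm1 : 1 ≤ greedy M q 1 m) (hone : gSum M q 1 (m+1) = 1)
    (hltr : ∀ r, r ≤ m → gSum M q 1 r < 1) {n : ℕ}
    (hF : qgSum M q 1 n = 1 - 1/q^(n - n % (m+1))
      + gSum M q 1 (n % (m+1)) / q^(n - n % (m+1))) :
    quasiGreedy M q 1 n
      = if n % (m+1) = m then greedy M q 1 m - 1 else greedy M q 1 (n % (m+1)) := by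
  have hq0 : (0:ℝ) < q := lt_trans one_pos hq1
  set r := n % (m+1) with hr
  have hrm : r ≤ m := by have : n % (m+1) < m+1 := Nat.mod_lt n (by omega); omega
  have hrn : r ≤ n := Nat.mod_le n _
  have hc : (0:ℝ) < q^(n-r) := by positivity
  have hw : (0:ℝ) < q^(r+1) := by positivity
  have hpow : q^(n+1) = q^(n-r) * q^(r+1) := by rw [← pow_add]; congr 1; omega
  have hiff : ∀ a : ℕ, (qgSum M q 1 n + (a:ℝ)/q^(n+1) < 1)
      ↔ (gSum M q 1 r + (a:ℝ)/q^(r+1) < 1) := by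
    intro a
    rw [hF, hpow]
    exact shift_lt hc _ _
  have hgm : gSum M q 1 m + (greedy M q 1 m : ℝ)/q^(m+1) = 1 := by
    rw [← gSum_succ]; exact hone
  have hβM : greedy M q 1 m ≤ M := greedy_le M q m
  show qgDigit M q 1 (qgSum M q 1 n) n = _
  by_cases hcase : r = m
  · rw [if_pos hcase]
    apply Nat.findGreatest_eq_iff.mpr
    refine ⟨by omega, fun _ => ?_, fun a ha haM => ?_⟩
    · show qgSum M q 1 n + ((greedy M q 1 m - 1 : ℕ):ℝ)/q^(n+1) < 1
      apply (hiff _).mpr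
      rw [hcase]
      have hcast : ((greedy M q 1 m - 1 : ℕ) : ℝ) = (greedy M q 1 m : ℝ) - 1 := by
        push_cast [hm1]; ring
      rw [hcast]
      have hpos : (0:ℝ) < 1/q^(m+1) := by positivity
      have he : ((greedy M q 1 m : ℝ) - 1)/q^(m+1)
          = (greedy M q 1 m : ℝ)/q^(m+1) - 1/q^(m+1) := by ring
      rw [he]
      linarith
    · intro hcon
      have h2 := (hiff a).mp hcon
      rw [hcase] at h2
      have haβ : greedy M q 1 m ≤ a := by omega
      have hmono : (greedy M q 1 m : ℝ)/q^(m+1) ≤ (a:ℝ)/q^(m+1) := by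
        gcongr
      linarith
  · rw [if_neg hcase]
    apply Nat.findGreatest_eq_iff.mpr
    refine ⟨greedy_le M q r, fun _ => ?_, fun a ha haM => ?_⟩
    · show qgSum M q 1 n + ((greedy M q 1 r : ℕ):ℝ)/q^(n+1) < 1
      apply (hiff _).mpr
      rw [← gSum_succ]
      exact hltr (r+1) (by omega)
    · intro hcon
      exact greedy_greatest ha haM (le_of_lt ((hiff a).mp hcon))

lemma part1_formula (hq1 : 1 < q) {m : ℕ}
    (hm1 : 1 ≤ greedy M q 1 m) (hone : gSum M q 1 (m+1) = 1)
    (hltr : ∀ r, r ≤ m → gSum M q 1 r < 1) :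
    ∀ n, qgSum M q 1 n = 1 - 1/q^(n - n % (m+1))
      + gSum M q 1 (n % (m+1)) / q^(n - n % (m+1)) := by
  have hq0 : (0:ℝ) < q := lt_trans one_pos hq1
  have hqne : q ≠ 0 := ne_of_gt hq0
  intro n
  induction n with
  | zero => norm_num [qgSum, gSum]
  | succ n ih =>
    have hD := part1_digit hq1 hm1 hone hltr ih
    rw [qgSum_succ, ih, hD]
    set r := n % (m+1) with hr
    have hrm : r ≤ m := by have : n % (m+1) < m+1 := Nat.mod_lt n (by omega); omega
    have hrn : r ≤ n := Nat.mod_le n _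
    by_cases hcase : r = m
    · rw [if_pos hcase]
      have h1 : (n+1) % (m+1) = 0 := mod_succ_eq_zero (by rw [← hr]; exact hcase)
      rw [h1]
      have hg0 : gSum M q 1 0 = 0 := rfl
      rw [hg0, Nat.sub_zero]
      have hgm : gSum M q 1 m = 1 - (greedy M q 1 m : ℝ)/q^(m+1) := by
        have h2 : gSum M q 1 m + (greedy M q 1 m : ℝ)/q^(m+1) = 1 := by
          rw [← gSum_succ]; exact hone
        linarith
      have hcast : ((greedy M q 1 m - 1 : ℕ) : ℝ) = (greedy M q 1 m : ℝ) - 1 := by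
        push_cast [hm1]; ring
      have hmn : m ≤ n := le_trans (le_of_eq hcase.symm) hrn
      have hpow : q^(n+1) = q^(n-m) * q^(m+1) := by rw [← pow_add]; congr 1; omega
      rw [hcase, hgm, hcast, hpow]
      field_simp
      ring
    · have h1 : (n+1) % (m+1) = r + 1 := mod_succ_eq_succ (by rw [← hr]; exact hcase)
      rw [if_neg hcase, h1]
      have h2 : n + 1 - (r+1) = n - r := by omega
      rw [h2, gSum_succ]
      have hpow : q^(n+1) = q^(n-r) * q^(r+1) := by rw [← pow_add]; congr 1; omega
      rw [hpow]
      field_simp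
      ring

end QGAux


open QGAux in
/-- Proposition 3.4 (b): if the greedy expansion `(β_i)` of `1` has a last nonzero element
`β_m`, then the quasi-greedy expansion `(α_i)` of `1` is periodic with smallest period
`β_1 … β_{m-1} (β_m - 1)`; otherwise `(β_i) = (α_i)`, and this sequence is periodic only
in the extreme case `q = M + 1`, when `(β_i) = (α_i) = M^∞`. -/
theorem quasiGreedy_one_eq_of_greedy_one (M : ℕ) (hM : 0 < M) (q : ℝ) (hq1 : 1 < q)
    (hq2 : q ≤ (M : ℝ) + 1) :
    (∀ m : ℕ, 1 ≤ greedy M q 1 m → (∀ i, m < i → greedy M q 1 i = 0) →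
      ((∀ i, quasiGreedy M q 1 i =
          if i % (m + 1) = m then greedy M q 1 m - 1 else greedy M q 1 (i % (m + 1))) ∧
        ∀ p, 0 < p → (∀ i, quasiGreedy M q 1 (i + p) = quasiGreedy M q 1 i) →
          m + 1 ≤ p)) ∧
    ({n | greedy M q 1 n ≠ 0}.Infinite →
      greedy M q 1 = quasiGreedy M q 1 ∧
      ((∃ p, 0 < p ∧ ∀ i, quasiGreedy M q 1 (i + p) = quasiGreedy M q 1 i) ↔
        (q = (M : ℝ) + 1 ∧ ∀ i, quasiGreedy M q 1 i = M))) := by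
  constructor
  · intro m hm1 hz
    obtain ⟨hone, hltr⟩ := part1_basics hq1 hq2 hm1 hz
    constructor
    · intro i
      exact part1_digit hq1 hm1 hone hltr (part1_formula hq1 hm1 hone hltr i)
    · intro p hp hper
      by_contra hcon
      push_neg at hcon
      have hpm : p ≤ m := by omega
      have hqg := periodic_qgSum_eq hq1 hq2 hper
      have hF := part1_formula hq1 hm1 hone hltr p
      have hmod : p % (m+1) = p := Nat.mod_eq_of_lt (by omega)
      rw [hmod, Nat.sub_self, pow_zero] at hF
      have hgp : gSum M q 1 p = 1 - (1/q)^p := by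
        rw [← hqg, hF]; ring
      have hsh := (greedy_shift_sum hq1 hgp m).2
      have hzero : greedy M q 1 (p+m) = 0 := hz _ (by omega)
      omega
  · intro hinf
    have hlt := gSum_lt_one_of_inf hq1 hq2 hinf
    have heq := greedy_eq_quasi_of_lt hq1 hlt
    have hfun : greedy M q 1 = quasiGreedy M q 1 := funext fun n => (heq n).2
    refine ⟨hfun, ?_, ?_⟩
    · rintro ⟨p, hp, hper⟩
      have hqg := periodic_qgSum_eq hq1 hq2 hper
      have hgp : gSum M q 1 p = 1 - (1/q)^p := by rw [(heq p).1]; exact hqg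
      obtain ⟨n, rfl⟩ : ∃ n, p = n + 1 := ⟨p - 1, by omega⟩
      have hqM : q = (M:ℝ) + 1 := top_of_gSum_eq hq1 hq2 (by rw [hgp]; ring)
      refine ⟨hqM, fun i => ?_⟩
      rw [← (heq i).2]
      exact (greedy_of_top hq1 hqM i).2
    · rintro ⟨hqM, hall⟩
      exact ⟨1, one_pos, fun i => by rw [hall (i+1), hall i]⟩
end
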